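/- Let A be a Marot ring, B a GD-overring of A, Q a prime ideal of B, and P = Q ∩ A. Then the contraction map Spec(B_(Q)) → Spec(A_(P)) is surjective. -/

import Mathlib

/-- A Marot ring: regular ideals are generated by their regular elements. -/
def IsMarot (A : Type*) [CommRing A] : Prop :=
  ∀ I : Ideal A, (∃ r ∈ I, r ∈ nonZeroDivisors A) →
    I = Ideal.span {r : A | r ∈ I ∧ r ∈ nonZeroDivisors A}

/-- Going down for a ring homomorphism. -/
def GoingDown {R S : Type*} [CommRing R] [CommRing S] (f : R →+* S) : Prop :=
  ∀ (P₁ P₂ : Ideal R), P₁.IsPrime → P₂.IsPrime → P₁ ≤ P₂ →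
    ∀ Q₂ : Ideal S, Q₂.IsPrime → Q₂.comap f = P₂ →
      ∃ Q₁ : Ideal S, Q₁.IsPrime ∧ Q₁ ≤ Q₂ ∧ Q₁.comap f = P₁

/-- The underlying set of the regular quotient ring. -/
def rqSet {R K : Type*} [CommRing R] [CommRing K] (f : R →+* K) (P : Ideal R) : Set K :=
  {x | ∃ a s : R, s ∈ nonZeroDivisors R ∧ s ∉ P ∧ x * f s = f a}

/-- The regular quotient ring at a prime, as a subring of K. -/
def rqSub {R K : Type*} [CommRing R] [CommRing K] (f : R →+* K) (P : Ideal R)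
    (hP : P.IsPrime) : Subring K where
  carrier := rqSet f P
  one_mem' := ⟨1, 1, Submonoid.one_mem _, fun h => hP.ne_top (P.eq_top_iff_one.mpr h), by simp⟩
  zero_mem' := ⟨0, 1, Submonoid.one_mem _, fun h => hP.ne_top (P.eq_top_iff_one.mpr h), by simp⟩
  mul_mem' := by
    rintro x y ⟨a, s, hs, hsP, hx⟩ ⟨b, t, ht, htP, hy⟩
    refine ⟨a * b, s * t, mul_mem hs ht, fun h => ((hP.mem_or_mem h).elim hsP htP), ?_⟩
    rw [map_mul, map_mul]
    calc x * y * (f s * f t) = (x * f s) * (y * f t) := by ring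
    _ = f a * f b := by rw [hx, hy]
  add_mem' := by
    rintro x y ⟨a, s, hs, hsP, hx⟩ ⟨b, t, ht, htP, hy⟩
    refine ⟨a * t + b * s, s * t, mul_mem hs ht, fun h => ((hP.mem_or_mem h).elim hsP htP), ?_⟩
    rw [map_mul, map_add, map_mul, map_mul]
    calc (x + y) * (f s * f t) = (x * f s) * f t + (y * f t) * f s := by ring
    _ = f a * f t + f b * f s := by rw [hx, hy]
  neg_mem' := by
    rintro x ⟨a, s, hs, hsP, hx⟩
    exact ⟨-a, s, hs, hsP, by rw [map_neg, neg_mul, hx]⟩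

set_option maxHeartbeats 1000000 in
set_option synthInstance.maxHeartbeats 400000 in
theorem statement12 (A : Type*) [CommRing A] (hM : IsMarot A)
    (B : Subalgebra A (Localization (nonZeroDivisors A)))
    (hGD : GoingDown (algebraMap A B))
    (Q : Ideal B) (hQ : Q.IsPrime) :
    ∃ hle : rqSub (algebraMap A (Localization (nonZeroDivisors A))) (Q.comap (algebraMap A B))
        (hQ.comap (algebraMap A B)) ≤ rqSub B.toSubring.subtype Q hQ,
      Function.Surjective (PrimeSpectrum.comap (Subring.inclusion hle)) := by
  classical
  set K := Localization (nonZeroDivisors A) with hKdef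
  have hP : (Q.comap (algebraMap A B)).IsPrime := hQ.comap (algebraMap A B)
  set f : A →+* K := algebraMap A K with hfdef
  set g : B →+* K := B.toSubring.subtype with hgdef
  have hfinj : Function.Injective f := IsFractionRing.injective A K
  have hginj : Function.Injective g := fun a b h => Subtype.ext h
  have halg : ∀ a : A, g (algebraMap A B a) = f a := fun a => rfl
  -- images of A-regular elements are units of K
  have hunitA : ∀ s : A, s ∈ nonZeroDivisors A → IsUnit (f s) :=
    fun s hs => IsLocalization.map_units K ⟨s, hs⟩
  -- images of A-regular elements are B-regular
  have hnzdB : ∀ s : A, s ∈ nonZeroDivisors A →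
      algebraMap A B s ∈ nonZeroDivisors B := by
    intro s hs
    rw [mem_nonZeroDivisors_iff_right]
    intro b hb
    have h1 : g b * f s = 0 := by rw [← halg s, ← map_mul, hb, map_zero]
    have h2 : g b = 0 := ((hunitA s hs).mul_left_eq_zero).mp h1
    exact hginj (by rw [h2, map_zero])
  -- images of B-regular elements are units of K
  have hunitB : ∀ t : B, t ∈ nonZeroDivisors B → IsUnit (g t) := by
    intro t ht
    obtain ⟨⟨a, s⟩, hxs⟩ := IsLocalization.surj (nonZeroDivisors A) (g t)
    have ha : a ∈ nonZeroDivisors A := by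
      rw [mem_nonZeroDivisors_iff_right]
      intro b hb
      have h1 : (f b * g t) * f (s : A) = 0 := by
        rw [mul_assoc, hxs, ← map_mul, hb, map_zero]
      have h2 : f b * g t = 0 := ((hunitA s s.2).mul_left_eq_zero).mp h1
      have h3 : g (algebraMap A B b * t) = 0 := by rw [map_mul, halg, h2]
      have h4 : algebraMap A B b * t = 0 := hginj (by rw [h3, map_zero])
      have h5 : algebraMap A B b = 0 := (mem_nonZeroDivisors_iff_right.mp ht) _ h4
      have h6 : f b = 0 := by rw [← halg, h5, map_zero]
      exact hfinj (by rw [h6, map_zero])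
    have : IsUnit (g t * f (s : A)) := hxs ▸ hunitA a ha
    exact isUnit_of_mul_isUnit_left this
  -- the inclusion
  have hle : rqSub f (Q.comap (algebraMap A B)) (hQ.comap (algebraMap A B)) ≤
      rqSub g Q hQ := by
    rintro x ⟨a, s, hs, hsP, hx⟩
    exact ⟨algebraMap A B a, algebraMap A B s, hnzdB s hs, fun h => hsP h,
      by rw [halg, halg]; exact hx⟩
  refine ⟨hle, ?_⟩
  intro 𝔭
  -- the canonical map A → A_(P)
  have hρmem : ∀ a : A, f a ∈ rqSub f (Q.comap (algebraMap A B)) (hQ.comap (algebraMap A B)) :=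
    fun a => ⟨a, 1, one_mem _,
      fun h => hP.ne_top ((Q.comap (algebraMap A B)).eq_top_iff_one.mpr h), by simp⟩
  set ρ : A →+* (rqSub f (Q.comap (algebraMap A B)) (hQ.comap (algebraMap A B))) :=
    f.codRestrict _ hρmem with hρdef
  set P₁ : Ideal A := 𝔭.asIdeal.comap ρ with hP₁def
  have hP₁ : P₁.IsPrime := 𝔭.isPrime.comap ρ
  -- regular elements of P₁ lie in P
  have hP₁P : ∀ r ∈ P₁, r ∈ nonZeroDivisors A → r ∈ Q.comap (algebraMap A B) := by
    intro r hr hreg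
    by_contra hrP
    have hv : (IsLocalization.mk' K (1 : A) ⟨r, hreg⟩ : K) ∈
        rqSub f (Q.comap (algebraMap A B)) (hQ.comap (algebraMap A B)) :=
      ⟨1, r, hreg, hrP, IsLocalization.mk'_spec K 1 ⟨r, hreg⟩⟩
    have h1 : (ρ r) * ⟨_, hv⟩ = 1 := by
      apply Subtype.ext
      show f r * IsLocalization.mk' K (1 : A) ⟨r, hreg⟩ = 1
      rw [mul_comm, IsLocalization.mk'_spec K 1 ⟨r, hreg⟩, map_one]
    have : (1 : (rqSub f (Q.comap (algebraMap A B)) (hQ.comap (algebraMap A B)))) ∈ 𝔭.asIdeal :=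
      h1 ▸ Ideal.mul_mem_right _ _ hr
    exact 𝔭.isPrime.ne_top (Ideal.eq_top_iff_one _ |>.mpr this)
  -- description of 𝔭 as the extension of P₁
  have hext : ∀ x : (rqSub f (Q.comap (algebraMap A B)) (hQ.comap (algebraMap A B))),
      x ∈ 𝔭.asIdeal ↔ ∃ a s : A, a ∈ P₁ ∧ s ∈ nonZeroDivisors A ∧
        s ∉ Q.comap (algebraMap A B) ∧ (x : K) * f s = f a := by
    intro x
    constructor
    · intro hx𝔭
      obtain ⟨a, s, hs, hsP, hx⟩ := x.2
      have heq : ρ a = x * ρ s := by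
        apply Subtype.ext
        show f a = (x : K) * f s
        exact hx.symm
      have ha : a ∈ P₁ := by
        show ρ a ∈ 𝔭.asIdeal
        rw [heq]
        exact Ideal.mul_mem_right _ _ hx𝔭
      exact ⟨a, s, ha, hs, hsP, hx⟩
    · rintro ⟨a, s, ha, hs, hsP, hx⟩
      have heq : ρ a = x * ρ s := by
        apply Subtype.ext
        show f a = (x : K) * f s
        exact hx.symm
      have hmul : x * ρ s ∈ 𝔭.asIdeal := heq ▸ ha
      rcases 𝔭.isPrime.mem_or_mem hmul with h | h
      · exact h
      · exact absurd (hP₁P s h hs) hsP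
  -- construct the prime Q₁ of B
  obtain ⟨Q₁, hQ₁, hQ₁A, hQ₁disj⟩ : ∃ Q₁ : Ideal B, Q₁.IsPrime ∧
      Q₁.comap (algebraMap A B) = P₁ ∧
      ∀ t ∈ Q₁, t ∈ nonZeroDivisors B → t ∈ Q := by
    by_cases hcase : ∃ r ∈ P₁, r ∈ nonZeroDivisors A
    · -- P₁ is regular: use Marot + going down
      have hsub : P₁ ≤ Q.comap (algebraMap A B) := by
        calc P₁ = Ideal.span {r : A | r ∈ P₁ ∧ r ∈ nonZeroDivisors A} := hM P₁ hcase
        _ ≤ Q.comap (algebraMap A B) :=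
          Ideal.span_le.mpr (fun r hr => hP₁P r hr.1 hr.2)
      obtain ⟨Q₁, h1, h2, h3⟩ := hGD P₁ (Q.comap (algebraMap A B)) hP₁ hP hsub Q hQ rfl
      exact ⟨Q₁, h1, h3, fun t htQ₁ _ => h2 htQ₁⟩
    · -- P₁ is non-regular: pull back a prime of K
      push_neg at hcase
      have hdisj : Disjoint ((nonZeroDivisors A : Submonoid A) : Set A) (P₁ : Set A) :=
        Set.disjoint_left.mpr (fun {a} ha hp => hcase a hp ha)
      have h𝔔 : (P₁.map f).IsPrime :=
        IsLocalization.isPrime_of_isPrime_disjoint (nonZeroDivisors A) K P₁ hP₁ hdisj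
      have hcomap : (P₁.map f).comap f = P₁ :=
        IsLocalization.comap_map_of_isPrime_disjoint (nonZeroDivisors A) K hP₁ hdisj
      refine ⟨(P₁.map f).comap g, h𝔔.comap g, ?_, ?_⟩
      · rw [Ideal.comap_comap]
        exact hcomap
      · intro t ht hnz
        exact absurd (Ideal.eq_top_of_isUnit_mem (P₁.map f) (Ideal.mem_comap.mp ht) (hunitB t hnz)) h𝔔.ne_top
  -- the prime of B_(Q)
  set q : Ideal (rqSub g Q hQ) :=
    { carrier := {x | ∃ b t : B, t ∈ nonZeroDivisors B ∧ t ∉ Q ∧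
        (x : K) * g t = g b ∧ b ∈ Q₁},
      zero_mem' := ⟨0, 1, one_mem _, fun h => hQ.ne_top (Q.eq_top_iff_one.mpr h),
        by simp, Q₁.zero_mem⟩,
      add_mem' := by
        rintro x y ⟨b₁, t₁, ht₁, ht₁Q, hx, hb₁⟩ ⟨b₂, t₂, ht₂, ht₂Q, hy, hb₂⟩
        refine ⟨b₁ * t₂ + b₂ * t₁, t₁ * t₂, mul_mem ht₁ ht₂,
          fun h => ((hQ.mem_or_mem h).elim ht₁Q ht₂Q), ?_,
          add_mem (Q₁.mul_mem_right _ hb₁) (Q₁.mul_mem_right _ hb₂)⟩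
        have hco : ((x + y : (rqSub g Q hQ)) : K) = (x : K) + (y : K) := rfl
        rw [hco, map_mul, map_add, map_mul, map_mul]
        calc ((x : K) + y) * (g t₁ * g t₂)
            = ((x : K) * g t₁) * g t₂ + ((y : K) * g t₂) * g t₁ := by ring
        _ = g b₁ * g t₂ + g b₂ * g t₁ := by rw [hx, hy]
      smul_mem' := by
        rintro c x ⟨b, t, ht, htQ, hx, hb⟩
        obtain ⟨a, s, hs, hsQ, hc⟩ := c.2
        refine ⟨a * b, s * t, mul_mem hs ht,
          fun h => ((hQ.mem_or_mem h).elim hsQ htQ), ?_, Q₁.mul_mem_left _ hb⟩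
        rw [map_mul, map_mul]
        show (c : K) * (x : K) * (g s * g t) = g a * g b
        calc (c : K) * (x : K) * (g s * g t)
            = ((c : K) * g s) * ((x : K) * g t) := by ring
        _ = g a * g b := by rw [hc, hx] } with hqdef
  have hqprime : q.IsPrime := by
    rw [Ideal.isPrime_iff]
    constructor
    · intro h
      have h1 : (1 : (rqSub g Q hQ)) ∈ q := h ▸ Submodule.mem_top
      obtain ⟨b, t, ht, htQ, heq, hb⟩ := h1
      have : t = b := hginj (by rw [← heq]; simp)
      exact htQ (hQ₁disj t (this ▸ hb) ht)
    · rintro x y ⟨b, t, ht, htQ, heq, hb⟩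
      obtain ⟨a₁, s₁, hs₁, hs₁Q, hx⟩ := x.2
      obtain ⟨a₂, s₂, hs₂, hs₂Q, hy⟩ := y.2
      have hxy : (x : K) * (y : K) * g t = g b := by
        have hco : ((x * y : (rqSub g Q hQ)) : K) = (x : K) * (y : K) := rfl
        rw [← hco]; exact heq
      have hkey : g (a₁ * a₂ * t) = g (b * (s₁ * s₂)) := by
        rw [map_mul, map_mul, map_mul, map_mul, ← hx, ← hy, ← hxy]; ring
      have hmem : a₁ * a₂ * t ∈ Q₁ := by
        rw [hginj hkey]
        exact Q₁.mul_mem_right _ hb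
      have htQ₁ : t ∉ Q₁ := fun h => htQ (hQ₁disj t h ht)
      have h12 : a₁ * a₂ ∈ Q₁ := ((hQ₁.mem_or_mem hmem).resolve_right htQ₁)
      rcases hQ₁.mem_or_mem h12 with h | h
      · exact Or.inl ⟨a₁, s₁, hs₁, hs₁Q, hx, h⟩
      · exact Or.inr ⟨a₂, s₂, hs₂, hs₂Q, hy, h⟩
  refine ⟨⟨q, hqprime⟩, ?_⟩
  apply PrimeSpectrum.ext
  rw [PrimeSpectrum.comap_asIdeal]
  ext x
  rw [Ideal.mem_comap]
  constructor
  · rintro ⟨b, t, ht, htQ, heq, hb⟩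
    obtain ⟨a, s, hs, hsP, hx⟩ := x.2
    have heq' : (x : K) * g t = g b := heq
    have hkey : g (algebraMap A B a * t) = g (b * algebraMap A B s) := by
      rw [map_mul, map_mul, halg, halg, ← hx, ← heq']; ring
    have hmem : algebraMap A B a * t ∈ Q₁ := by
      rw [hginj hkey]
      exact Q₁.mul_mem_right _ hb
    have htQ₁ : t ∉ Q₁ := fun h => htQ (hQ₁disj t h ht)
    have haQ₁ : algebraMap A B a ∈ Q₁ := (hQ₁.mem_or_mem hmem).resolve_right htQ₁
    have haP₁ : a ∈ P₁ := by rw [← hQ₁A]; exact haQ₁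
    exact (hext x).mpr ⟨a, s, haP₁, hs, hsP, hx⟩
  · intro hx𝔭
    obtain ⟨a, s, ha, hs, hsP, hx⟩ := (hext x).mp hx𝔭
    have haQ₁ : algebraMap A B a ∈ Q₁ := by rw [← hQ₁A] at ha; exact ha
    exact ⟨algebraMap A B a, algebraMap A B s, hnzdB s hs, fun h => hsP h,
      by rw [halg, halg]; exact hx, haQ₁⟩
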